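/- Let G be a Δ-regular finite simple graph with Δ ≥ 1, let 0 < γ ≤ Δ, and run the random independent set procedure on G with parameter γ, producing the random independent set I. Then for every vertex v of G, P[v ∈ I] = (1/Δ)·∫₀^γ (1 − x/Δ)^Δ dx. -/

import Mathlib

open MeasureTheory Finset
open scoped ENNReal

/-- The uniform probability measure on the interval [0,1]. -/
noncomputable def uniform01 : Measure ℝ := volume.restrict (Set.Icc 0 1)

instance : IsProbabilityMeasure uniform01 :=
  ⟨by simp [uniform01, Real.volume_Icc]⟩

/-- The law of the random data attached to a single vertex: a Bernoulli(p) activation bit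
together with an independent uniform priority in [0,1]. -/
noncomputable def coordMeasure (p : ℝ≥0∞) : Measure (Bool × ℝ) :=
  ((PMF.bernoulli (min p 1).toNNReal
    (by simpa using ENNReal.toNNReal_mono ENNReal.one_ne_top (min_le_right p 1))).toMeasure).prod uniform01

instance (p : ℝ≥0∞) : IsProbabilityMeasure (coordMeasure p) := by
  unfold coordMeasure; infer_instance

/-- The underlying probability space of the random independent set procedure: the product over
all vertices of (Bernoulli(p) × Uniform[0,1]). -/
noncomputable def procMeasure (V : Type) [Fintype V] (p : ℝ≥0∞) : Measure (V → Bool × ℝ) :=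
  Measure.pi fun _ => coordMeasure p

/-- The random independent set produced by the procedure: the set of activated vertices whose
priority exceeds that of every activated neighbour. -/
noncomputable def indepSet {V : Type} [Fintype V] [DecidableEq V] (G : SimpleGraph V) [DecidableRel G.Adj]
    (ω : V → Bool × ℝ) : Finset V :=
  Finset.univ.filter fun v => (ω v).1 = true ∧
    ∀ u ∈ G.neighborFinset v, (ω u).1 = true → (ω u).2 < (ω v).2

/-! ### Auxiliary material -/

/-- The set of vertex data that loses against priority `t`. -/
def sliceSet (t : ℝ) : Set (Bool × ℝ) := {y | y.1 = true → y.2 < t}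

lemma sliceSet_eq (t : ℝ) :
    sliceSet t = (({false} : Set Bool) ×ˢ (Set.univ : Set ℝ)) ∪
      (({true} : Set Bool) ×ˢ Set.Iio t) := by
  ext ⟨b, r⟩; cases b <;> simp [sliceSet]

lemma measurableSet_sliceSet (t : ℝ) : MeasurableSet (sliceSet t) := by
  rw [sliceSet_eq]
  exact ((measurableSet_singleton _).prod MeasurableSet.univ).union
    ((measurableSet_singleton _).prod measurableSet_Iio)

lemma monotone_sliceMeasure (q : ℝ≥0∞) :
    Monotone (fun t => coordMeasure q (sliceSet t)) := by
  intro t t' htt'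
  exact measure_mono fun y hy hb => lt_of_lt_of_le (hy hb) htt'

lemma uniform01_Iio {t : ℝ} (ht0 : 0 ≤ t) (ht1 : t ≤ 1) :
    uniform01 (Set.Iio t) = ENNReal.ofReal t := by
  rw [uniform01, Measure.restrict_apply measurableSet_Iio]
  have : Set.Iio t ∩ Set.Icc 0 1 = Set.Ico 0 t := by
    ext x
    simp only [Set.mem_inter_iff, Set.mem_Iio, Set.mem_Icc, Set.mem_Ico]
    constructor
    · rintro ⟨h1, h2, _⟩; exact ⟨h2, h1⟩
    · rintro ⟨h1, h2⟩; exact ⟨h2, h1, le_trans (le_of_lt h2) ht1⟩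
  rw [this, Real.volume_Ico, sub_zero]

lemma bern_true {q : NNReal} (hq : q ≤ 1) :
    (PMF.bernoulli q hq).toMeasure {true} = (q : ℝ≥0∞) := by
  rw [PMF.toMeasure_apply_singleton _ _ (measurableSet_singleton _)]
  rfl

lemma bern_false {q : NNReal} (hq : q ≤ 1) :
    (PMF.bernoulli q hq).toMeasure {false} = 1 - (q : ℝ≥0∞) := by
  rw [PMF.toMeasure_apply_singleton _ _ (measurableSet_singleton _)]
  show ((1 - q : NNReal) : ℝ≥0∞) = 1 - (q : ℝ≥0∞)
  rw [ENNReal.coe_sub, ENNReal.coe_one]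

lemma coordMeasure_sliceSet {p : ℝ} (hp0 : 0 ≤ p) (hp1 : p ≤ 1) {t : ℝ}
    (ht : t ∈ Set.Icc (0:ℝ) 1) :
    coordMeasure (ENNReal.ofReal p) (sliceSet t) = ENNReal.ofReal (1 - p + p * t) := by
  have hmin : min (ENNReal.ofReal p) 1 = ENNReal.ofReal p :=
    min_eq_left (ENNReal.ofReal_le_one.mpr hp1)
  have hdisj : Disjoint (({false} : Set Bool) ×ˢ (Set.univ : Set ℝ))
      (({true} : Set Bool) ×ˢ Set.Iio t) := by
    rw [Set.disjoint_left]
    rintro ⟨b, r⟩ h1 h2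
    simp only [Set.mem_prod, Set.mem_singleton_iff] at h1 h2
    rw [h1.1] at h2; exact Bool.false_ne_true h2.1
  rw [coordMeasure, sliceSet_eq,
    measure_union hdisj ((measurableSet_singleton _).prod measurableSet_Iio),
    Measure.prod_prod, Measure.prod_prod, measure_univ, mul_one]
  erw [bern_false, bern_true]
  rw [hmin, ENNReal.coe_toNNReal ENNReal.ofReal_ne_top, uniform01_Iio ht.1 ht.2,
    ← ENNReal.ofReal_one, ← ENNReal.ofReal_sub _ hp0,
    ← ENNReal.ofReal_mul hp0, ← ENNReal.ofReal_add (by linarith) (mul_nonneg hp0 ht.1)]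

/-- Let G be a Δ-regular finite simple graph with Δ ≥ 1, let 0 < γ ≤ Δ, and run
the random independent set procedure on G with parameter γ (activation probability γ/Δ).
Then for every vertex v of G, P[v ∈ I] = (1/Δ)·∫₀^γ (1 − x/Δ)^Δ dx. -/
theorem stmt6 {V : Type} [Fintype V] [DecidableEq V] (G : SimpleGraph V) [DecidableRel G.Adj]
    (Δ : ℕ) (hΔ : 1 ≤ Δ) (hreg : G.IsRegularOfDegree Δ)
    (γ : ℝ) (hγ0 : 0 < γ) (hγΔ : γ ≤ (Δ : ℝ)) (v : V) :
    ((procMeasure V (ENNReal.ofReal (γ / (Δ : ℝ)))) {ω | v ∈ indepSet G ω}).toReal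
      = (1 / (Δ : ℝ)) * ∫ x in (0:ℝ)..γ, (1 - x / (Δ : ℝ)) ^ Δ := by
  classical
  have hΔr : (0:ℝ) < (Δ : ℝ) := by exact_mod_cast Nat.lt_of_lt_of_le Nat.zero_lt_one hΔ
  set p : ℝ := γ / (Δ : ℝ) with hpdef
  have hp0 : 0 < p := div_pos hγ0 hΔr
  have hp0' : (0:ℝ) ≤ p := le_of_lt hp0
  have hp1 : p ≤ 1 := (div_le_one hΔr).mpr hγΔ
  set pe : ℝ≥0∞ := ENNReal.ofReal p with hpe
  have hmin : min pe 1 = pe := min_eq_left (ENNReal.ofReal_le_one.mpr hp1)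
  -- the event
  have hEv : {ω : V → Bool × ℝ | v ∈ indepSet G ω} =
      {ω : V → Bool × ℝ | (ω v).1 = true ∧
        ∀ u ∈ G.neighborFinset v, (ω u).1 = true → (ω u).2 < (ω v).2} := by
    ext ω; simp [indepSet]
  -- split off the coordinate at v
  set ν₂ : Measure ({u : V // ¬ u = v} → Bool × ℝ) :=
    Measure.pi fun _ => coordMeasure pe with hν₂
  set E' : Set ((Bool × ℝ) × ({u : V // ¬ u = v} → Bool × ℝ)) :=
    {x | x.1.1 = true ∧ ∀ w : {u : V // ¬ u = v},
      w.1 ∈ G.neighborFinset v → ((x.2 w).1 = true → (x.2 w).2 < x.1.2)} with hE'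
  have hE'm : MeasurableSet E' := by
    have h1 : MeasurableSet {x : (Bool × ℝ) × ({u : V // ¬ u = v} → Bool × ℝ) | x.1.1 = true} :=
      (measurable_fst.fst) (measurableSet_singleton true)
    have h2 : ∀ w : {u : V // ¬ u = v}, MeasurableSet
        {x : (Bool × ℝ) × ({u : V // ¬ u = v} → Bool × ℝ) |
          (x.2 w).1 = true → (x.2 w).2 < x.1.2} := by
      intro w
      have : {x : (Bool × ℝ) × ({u : V // ¬ u = v} → Bool × ℝ) |
          (x.2 w).1 = true → (x.2 w).2 < x.1.2}
          = {x | ¬ (x.2 w).1 = true} ∪ {x | (x.2 w).2 < x.1.2} := by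
        ext x; simp [imp_iff_not_or]
      rw [this]
      have hb : Measurable fun x : (Bool × ℝ) × ({u : V // ¬ u = v} → Bool × ℝ) =>
          (x.2 w).1 := ((measurable_pi_apply w).comp measurable_snd).fst
      have hr : Measurable fun x : (Bool × ℝ) × ({u : V // ¬ u = v} → Bool × ℝ) =>
          (x.2 w).2 := ((measurable_pi_apply w).comp measurable_snd).snd
      exact ((hb (measurableSet_singleton true)).compl).union
        (measurableSet_lt hr measurable_fst.snd)
    have : E' = {x : (Bool × ℝ) × ({u : V // ¬ u = v} → Bool × ℝ) | x.1.1 = true} ∩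
        ⋂ w : {u : V // ¬ u = v}, ⋂ (_ : w.1 ∈ G.neighborFinset v),
          {x | (x.2 w).1 = true → (x.2 w).2 < x.1.2} := by
      ext x; simp [hE']
    rw [this]
    exact h1.inter (MeasurableSet.iInter fun w => MeasurableSet.iInter fun _ => h2 w)
  -- measure preservation
  have h1 := measurePreserving_piEquivPiSubtypeProd
    (fun _ : V => coordMeasure pe) (fun u => u = v)
  have hΦ : MeasurePreserving
      ((Prod.map (⇑(MeasurableEquiv.funUnique {u : V // u = v} (Bool × ℝ)))
        (id : ({u : V // ¬ u = v} → Bool × ℝ) → _)) ∘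
        ⇑(MeasurableEquiv.piEquivPiSubtypeProd (fun _ : V => Bool × ℝ) (fun u => u = v)))
      (Measure.pi fun _ : V => coordMeasure pe) ((coordMeasure pe).prod ν₂) := by
    refine MeasurePreserving.comp ?_ h1
    convert (measurePreserving_funUnique (coordMeasure pe) {u : V // u = v}).prod
      (MeasurePreserving.id ν₂) using 3
  have hpre : (Prod.map (⇑(MeasurableEquiv.funUnique {u : V // u = v} (Bool × ℝ)))
      (id : ({u : V // ¬ u = v} → Bool × ℝ) → _)) ∘
        ⇑(MeasurableEquiv.piEquivPiSubtypeProd (fun _ : V => Bool × ℝ) (fun u => u = v))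
        ⁻¹' E'
      = {ω : V → Bool × ℝ | (ω v).1 = true ∧
        ∀ u ∈ G.neighborFinset v, (ω u).1 = true → (ω u).2 < (ω v).2} := by
    ext ω
    show ((ω v).1 = true ∧ ∀ w : {u : V // ¬ u = v},
        w.1 ∈ G.neighborFinset v → ((ω w.1).1 = true → (ω w.1).2 < (ω v).2)) ↔ _
    constructor
    · rintro ⟨hb, hall⟩
      refine ⟨hb, fun u hu => ?_⟩
      have huv : ¬ u = v := fun h =>
        (G.notMem_neighborFinset_self v) (h ▸ hu)
      exact hall ⟨u, huv⟩ hu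
    · rintro ⟨hb, hall⟩
      exact ⟨hb, fun w hw => hall w.1 hw⟩
  have hkey : procMeasure V pe {ω | v ∈ indepSet G ω} = ((coordMeasure pe).prod ν₂) E' := by
    rw [hEv, ← hpre]
    exact hΦ.measure_preimage hE'm.nullMeasurableSet
  -- the slice measure
  set g : ℝ → ℝ≥0∞ := fun t => coordMeasure pe (sliceSet t) with hg
  have hgmeas : Measurable g := (monotone_sliceMeasure pe).measurable
  have hslice : ∀ x : Bool × ℝ, ν₂ (Prod.mk x ⁻¹' E') =
      if x.1 = true then g x.2 ^ Δ else 0 := by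
    rintro ⟨b, t⟩
    cases b with
    | false =>
      rw [if_neg (by simp)]
      convert measure_empty (μ := ν₂)
      ext ρ; simp [hE']
    | true =>
      rw [if_pos rfl]
      have hset : Prod.mk (true, t) ⁻¹' E' =
          Set.pi Set.univ (fun w : {u : V // ¬ u = v} =>
            if w.1 ∈ G.neighborFinset v then sliceSet t else Set.univ) := by
        ext ρ
        simp only [hE', Set.mem_preimage, Set.mem_setOf_eq, Set.mem_pi, Set.mem_univ,
          true_and, forall_true_left]
        constructor
        · intro h w
          by_cases hw : w.1 ∈ G.neighborFinset v
          · rw [if_pos hw]; exact h w hw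
          · rw [if_neg hw]; trivial
        · intro h w hw
          have := h w
          rwa [if_pos hw] at this
      rw [hset, hν₂, Measure.pi_pi]
      have : ∀ w : {u : V // ¬ u = v},
          coordMeasure pe (if w.1 ∈ G.neighborFinset v then sliceSet t else Set.univ)
          = if w.1 ∈ G.neighborFinset v then g t else 1 := by
        intro w
        by_cases hw : w.1 ∈ G.neighborFinset v
        · rw [if_pos hw, if_pos hw]
        · rw [if_neg hw, if_neg hw, measure_univ]
      rw [Finset.prod_congr rfl fun w _ => this w, Finset.prod_ite,
        Finset.prod_const, Finset.prod_const, one_pow, mul_one]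
      congr 1
      have hcard : (Finset.univ.filter fun w : {u : V // ¬ u = v} =>
          w.1 ∈ G.neighborFinset v).card = (G.neighborFinset v).card := by
        apply Finset.card_bij (fun w _ => w.1)
        · intro a ha; exact (Finset.mem_filter.mp ha).2
        · intro a ha b hb h; exact Subtype.ext h
        · intro u hu
          exact ⟨⟨u, fun h => (G.notMem_neighborFinset_self v) (h ▸ hu)⟩,
            Finset.mem_filter.mpr ⟨Finset.mem_univ _, hu⟩, rfl⟩
      rw [hcard, G.card_neighborFinset_eq_degree, hreg v]
  -- compute the product measure of E'
  set f : Bool × ℝ → ℝ≥0∞ := fun x => if x.1 = true then g x.2 ^ Δ else 0 with hf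
  have hfmeas : Measurable f := by
    apply Measurable.ite
    · exact measurable_fst (measurableSet_singleton true)
    · exact (hgmeas.comp measurable_snd).pow_const Δ
    · exact measurable_const
  set J : ℝ≥0∞ := ∫⁻ t, g t ^ Δ ∂uniform01 with hJ
  have hprod : ((coordMeasure pe).prod ν₂) E' = pe * J := by
    rw [Measure.prod_apply hE'm]
    have : (fun x : Bool × ℝ => ν₂ (Prod.mk x ⁻¹' E')) = f := by
      funext x; rw [hslice x]
    rw [this]
    rw [show coordMeasure pe =
      ((PMF.bernoulli (min pe 1).toNNReal
        (by simpa using ENNReal.toNNReal_mono ENNReal.one_ne_top (min_le_right pe 1))).toMeasure).prod uniform01 from rfl]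
    rw [lintegral_prod _ hfmeas.aemeasurable]
    have hinner : ∀ b : Bool, (∫⁻ t, f (b, t) ∂uniform01) =
        Set.indicator {true} (fun _ => J) b := by
      intro b
      cases b with
      | false => simp [hf]
      | true => simp [hf, hJ]
    rw [lintegral_congr hinner, lintegral_indicator (measurableSet_singleton true),
      setLIntegral_const]
    erw [bern_true]
    rw [hmin, ENNReal.coe_toNNReal (a := pe) (by simp [hpe]), mul_comm]
  -- compute J
  set K : ℝ := ∫ t in Set.Icc (0:ℝ) 1, (1 - p + p * t) ^ Δ with hK
  have hcont : Continuous fun t : ℝ => (1 - p + p * t) ^ Δ := by fun_prop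
  have hJval : J = ENNReal.ofReal K := by
    rw [hJ, uniform01]
    have hcongr : ∫⁻ t in Set.Icc (0:ℝ) 1, g t ^ Δ ∂volume
        = ∫⁻ t in Set.Icc (0:ℝ) 1, ENNReal.ofReal ((1 - p + p * t) ^ Δ) ∂volume := by
      apply setLIntegral_congr_fun_ae measurableSet_Icc
      filter_upwards with t ht
      have h1 : g t = ENNReal.ofReal (1 - p + p * t) :=
        coordMeasure_sliceSet hp0' hp1 ht
      rw [h1, ENNReal.ofReal_pow (by nlinarith [ht.1, ht.2] : (0:ℝ) ≤ 1 - p + p * t)]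
    rw [hcongr, ← ofReal_integral_eq_lintegral_ofReal]
    · exact (hcont.integrableOn_Icc)
    · filter_upwards [ae_restrict_mem measurableSet_Icc] with t ht
      have : (0:ℝ) ≤ 1 - p + p * t := by nlinarith [ht.1, ht.2]
      positivity
  have hK0 : 0 ≤ K := by
    apply setIntegral_nonneg measurableSet_Icc
    intro t ht
    have : (0:ℝ) ≤ 1 - p + p * t := by nlinarith [ht.1, ht.2]
    positivity
  -- put everything together
  have htoReal : ((procMeasure V pe) {ω | v ∈ indepSet G ω}).toReal = p * K := by
    rw [hkey, hprod, hJval, hpe, ← ENNReal.ofReal_mul hp0', ENNReal.toReal_ofReal (by positivity)]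
  rw [htoReal]
  -- now the calculus
  have hKint : K = ∫ t in (0:ℝ)..1, (1 - p + p * t) ^ Δ := by
    rw [hK, MeasureTheory.integral_Icc_eq_integral_Ioc,
      ← intervalIntegral.integral_of_le zero_le_one]
  have hKval : K = p⁻¹ * ((1 - (1 - p) ^ (Δ + 1)) / ((Δ : ℝ) + 1)) := by
    rw [hKint]
    have : ∀ t : ℝ, (1 - p + p * t) ^ Δ = (fun x : ℝ => x ^ Δ) (p * t + (1 - p)) := by
      intro t; simp only []; ring_nf
    rw [intervalIntegral.integral_congr (fun t _ => this t),
      intervalIntegral.integral_comp_mul_add (fun x : ℝ => x ^ Δ) (ne_of_gt hp0) (1 - p)]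
    rw [integral_pow]
    simp only [smul_eq_mul, mul_zero, zero_add, mul_one]
    ring_nf
  have hRHS : (∫ x in (0:ℝ)..γ, (1 - x / (Δ : ℝ)) ^ Δ)
      = -(Δ : ℝ) * (((1 - p) ^ (Δ + 1) - 1) / ((Δ : ℝ) + 1)) := by
    have : ∀ x : ℝ, (1 - x / (Δ : ℝ)) ^ Δ
        = (fun y : ℝ => y ^ Δ) ((-(Δ : ℝ)⁻¹) * x + 1) := by
      intro x
      simp only []
      congr 1
      field_simp
      ring
    rw [intervalIntegral.integral_congr (fun x _ => this x),
      intervalIntegral.integral_comp_mul_add (fun y : ℝ => y ^ Δ)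
        (by simp [ne_of_gt hΔr]) 1]
    rw [integral_pow]
    have hb : -(Δ : ℝ)⁻¹ * γ + 1 = 1 - p := by
      rw [hpdef]; field_simp; ring
    rw [hb]
    simp only [smul_eq_mul, mul_zero, zero_add, one_pow, inv_neg, inv_inv]
    try ring
  rw [hRHS, hKval]
  have hΔne : (Δ : ℝ) ≠ 0 := ne_of_gt hΔr
  field_simp
  ring
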